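/- Suppose a_k = A + b_k h^{p} + O(h^{p+1}) for k = 0, ..., r-1 with ∑_k c_k b_k = B h^{q-p} + O(h^{q-p+1}) arranged so that ∑_k c_k a_k = A + O(h^{q}), and suppose weights ω_k satisfy ∑_k ω_k = 1 and ω_k - c_k = O(h^{p}). Then ∑_k ω_k a_k = A + O(h^{min(2p, q)}). -/
import Mathlib


/-- abstract WENO accuracy lemma: Suppose
`a_k(h) = A(h) + b_k(h) h^p + O(h^{p+1})` for `k = 0, …, r-1`, with `b_k, B` bounded and
`∑_k c_k b_k(h) = B(h) h^{q-p} + O(h^{q-p+1})`, arranged so that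
`∑_k c_k a_k(h) = A(h) + O(h^q)`; and suppose the weights `ω_k(h)` satisfy `∑_k ω_k = 1`
and `ω_k - c_k = O(h^p)`.  Then `∑_k ω_k a_k(h) = A(h) + O(h^{min(2p, q)})`. -/
theorem abstract_weno_accuracy
    (r p q : ℕ) (hr : 1 ≤ r) (hp : 1 ≤ p) (hpq : p ≤ q)
    (c : ℕ → ℝ) (hc : ∀ k < r, 0 < c k) (hcsum : ∑ k ∈ Finset.range r, c k = 1)
    (A B : ℝ → ℝ) (b : ℝ → ℕ → ℝ)
    (hbound : ∃ M : ℝ, ∀ h : ℝ, 0 < h → |B h| ≤ M ∧ ∀ k < r, |b h k| ≤ M)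
    (a : ℝ → ℕ → ℝ)
    (ha : ∃ C : ℝ, ∀ h : ℝ, 0 < h → ∀ k < r,
      |a h k - A h - b h k * h ^ p| ≤ C * h ^ (p + 1))
    (hb : ∃ C : ℝ, ∀ h : ℝ, 0 < h →
      |(∑ k ∈ Finset.range r, c k * b h k) - B h * h ^ (q - p)| ≤ C * h ^ (q - p + 1))
    (harr : ∃ C : ℝ, ∀ h : ℝ, 0 < h →
      |(∑ k ∈ Finset.range r, c k * a h k) - A h| ≤ C * h ^ q)
    (ω : ℝ → ℕ → ℝ)
    (hωsum : ∀ h : ℝ, 0 < h → ∑ k ∈ Finset.range r, ω h k = 1)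
    (hωc : ∃ C : ℝ, ∀ h : ℝ, 0 < h → ∀ k < r, |ω h k - c k| ≤ C * h ^ p) :
    ∃ C : ℝ, ∃ h₀ > 0, ∀ h : ℝ, 0 < h → h < h₀ →
      |(∑ k ∈ Finset.range r, ω h k * a h k) - A h| ≤ C * h ^ (min (2 * p) q) := by
  obtain ⟨M, hM⟩ := hbound
  obtain ⟨Ca, hCa⟩ := ha
  obtain ⟨Cq, hCq⟩ := harr
  obtain ⟨Cω, hCω⟩ := hωc
  have h0r : 0 < r := hr
  have hM0 : 0 ≤ M := le_trans (abs_nonneg _) (hM 1 one_pos).1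
  have hCa0 : 0 ≤ Ca := by
    have := hCa 1 one_pos 0 h0r
    simpa using le_trans (abs_nonneg _) this
  have hCq0 : 0 ≤ Cq := by
    have := hCq 1 one_pos
    simpa using le_trans (abs_nonneg _) this
  have hCω0 : 0 ≤ Cω := by
    have := hCω 1 one_pos 0 h0r
    simpa using le_trans (abs_nonneg _) this
  refine ⟨r * (Cω * Ca + Cω * M) + Cq, 1, one_pos, fun h hh hh1 => ?_⟩
  set m := min (2 * p) q with hm
  have hpow : ∀ j : ℕ, m ≤ j → h ^ j ≤ h ^ m := fun j hj =>
    pow_le_pow_of_le_one hh.le hh1.le hj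
  have hm2p : m ≤ 2 * p := min_le_left _ _
  have hmq : m ≤ q := min_le_right _ _
  have hsum := hωsum h hh
  have hhp : 0 ≤ h ^ p := by positivity
  have hhm : 0 ≤ h ^ m := by positivity
  have key : (∑ k ∈ Finset.range r, ω h k * a h k) - A h
      = (∑ k ∈ Finset.range r, (ω h k - c k) * (a h k - A h))
        + ((∑ k ∈ Finset.range r, c k * a h k) - A h) := by
    simp only [sub_mul, mul_sub, Finset.sum_sub_distrib, ← Finset.sum_mul, hsum, hcsum]
    ring
  have term1 : ∀ k ∈ Finset.range r,
      |(ω h k - c k) * (a h k - A h)| ≤ (Cω * Ca + Cω * M) * h ^ m := by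
    intro k hk
    rw [Finset.mem_range] at hk
    have h1 : |ω h k - c k| ≤ Cω * h ^ p := hCω h hh k hk
    have h2 : |a h k - A h| ≤ Ca * h ^ (p + 1) + M * h ^ p := by
      have e : a h k - A h = (a h k - A h - b h k * h ^ p) + b h k * h ^ p := by ring
      calc |a h k - A h| ≤ |a h k - A h - b h k * h ^ p| + |b h k * h ^ p| := by
            have t := abs_add_le (a h k - A h - b h k * h ^ p) (b h k * h ^ p)
            simpa using t
        _ ≤ Ca * h ^ (p + 1) + M * h ^ p := by
            refine add_le_add (hCa h hh k hk) ?_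
            rw [abs_mul, abs_of_nonneg hhp]
            exact mul_le_mul_of_nonneg_right ((hM h hh).2 k hk) hhp
    calc |(ω h k - c k) * (a h k - A h)| = |ω h k - c k| * |a h k - A h| := abs_mul _ _
      _ ≤ (Cω * h ^ p) * (Ca * h ^ (p + 1) + M * h ^ p) := by
          exact mul_le_mul h1 h2 (abs_nonneg _) (by positivity)
      _ = Cω * Ca * h ^ (p + (p + 1)) + Cω * M * h ^ (p + p) := by
          rw [pow_add, pow_add]; ring
      _ ≤ Cω * Ca * h ^ m + Cω * M * h ^ m := by
          refine add_le_add ?_ ?_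
          · exact mul_le_mul_of_nonneg_left (hpow _ (by omega)) (by positivity)
          · exact mul_le_mul_of_nonneg_left (hpow _ (by omega)) (by positivity)
      _ = (Cω * Ca + Cω * M) * h ^ m := by ring
  calc |(∑ k ∈ Finset.range r, ω h k * a h k) - A h|
      ≤ |∑ k ∈ Finset.range r, (ω h k - c k) * (a h k - A h)|
        + |(∑ k ∈ Finset.range r, c k * a h k) - A h| := by rw [key]; exact abs_add_le _ _
    _ ≤ (∑ k ∈ Finset.range r, |(ω h k - c k) * (a h k - A h)|) + Cq * h ^ q := by
        exact add_le_add (Finset.abs_sum_le_sum_abs _ _) (hCq h hh)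
    _ ≤ (∑ _k ∈ Finset.range r, (Cω * Ca + Cω * M) * h ^ m) + Cq * h ^ m := by
        refine add_le_add (Finset.sum_le_sum term1) ?_
        exact mul_le_mul_of_nonneg_left (hpow _ hmq) hCq0
    _ = r * (Cω * Ca + Cω * M) * h ^ m + Cq * h ^ m := by
        rw [Finset.sum_const, Finset.card_range]; push_cast; ring
    _ = (r * (Cω * Ca + Cω * M) + Cq) * h ^ m := by ring
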